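/- Let G be a graph and u, v non-adjacent vertices. Let Z_{u,v}(G) be the graph obtained by replacing u with a twin of v. Then χ(G) - 1 ≤ χ(Z_{u,v}(G)) ≤ χ(G), where χ denotes the chromatic number. -/

import Mathlib

open scoped Classical

/-- Zykov symmetrization: replace `u` with a twin of `v` (delete all edges at `u`,
join `u` to exactly the neighbours of `v`). -/
def zykov {V : Type*} (G : SimpleGraph V) (u v : V) : SimpleGraph V where
  Adj x y := x ≠ y ∧
    ((x ≠ u ∧ y ≠ u ∧ G.Adj x y) ∨ (x = u ∧ G.Adj v y) ∨ (y = u ∧ G.Adj v x))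
  symm := by
    constructor
    rintro x y ⟨hxy, h⟩
    refine ⟨hxy.symm, ?_⟩
    rcases h with ⟨hx, hy, h⟩ | ⟨hx, h⟩ | ⟨hy, h⟩
    · exact Or.inl ⟨hy, hx, h.symm⟩
    · exact Or.inr (Or.inr ⟨hx, h⟩)
    · exact Or.inr (Or.inl ⟨hy, h⟩)
  loopless := ⟨fun x h => h.1 rfl⟩

theorem zykov_chromaticNumber_bounds {V : Type*} (G : SimpleGraph V) (u v : V)
    (huv : u ≠ v) (hna : ¬ G.Adj u v) :
    G.chromaticNumber - 1 ≤ (zykov G u v).chromaticNumber ∧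
      (zykov G u v).chromaticNumber ≤ G.chromaticNumber := by
  have upper : (zykov G u v).chromaticNumber ≤ G.chromaticNumber := by
    apply SimpleGraph.chromaticNumber_le_of_forall_imp
    intro n ⟨c⟩
    refine ⟨SimpleGraph.Coloring.mk (fun x => if x = u then c v else c x) ?_⟩
    rintro x y ⟨hxy, ⟨hx, hy, h⟩ | ⟨hx, h⟩ | ⟨hy, h⟩⟩
    · simp only [hx, hy, if_neg]
      exact c.valid h
    · have hy : y ≠ u := fun hy => hxy (hx.trans hy.symm)
      simp only [hx, if_pos rfl, if_neg hy]
      exact c.valid h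
    · have hx : x ≠ u := fun hx => hxy (hx.trans hy.symm)
      simp only [hy, if_pos rfl, if_neg hx]
      exact (c.valid h).symm
  refine ⟨?_, upper⟩
  rw [tsub_le_iff_right]
  rcases eq_or_ne (zykov G u v).chromaticNumber ⊤ with h | h
  · simp [h]
  · obtain ⟨n, hn⟩ := WithTop.ne_top_iff_exists.mp h
    obtain ⟨c⟩ := SimpleGraph.colorable_of_chromaticNumber_ne_top h
    have : G.Colorable ((zykov G u v).chromaticNumber.toNat + 1) := by
      let f : V → Fin ((zykov G u v).chromaticNumber.toNat + 1) := fun x =>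
        if x = u then Fin.last _ else (c x).castSucc
      refine ⟨SimpleGraph.Coloring.mk f ?_⟩
      intro x y hxy
      have hne : x ≠ y := hxy.ne
      by_cases hx : x = u
      · have hy : y ≠ u := fun hy => hne (hx.trans hy.symm)
        simp only [f, if_pos hx, if_neg hy]
        exact fun hc => (Fin.castSucc_lt_last _).ne' hc
      · by_cases hy : y = u
        · simp only [f, if_neg hx, if_pos hy]
          exact fun hc => (Fin.castSucc_lt_last _).ne hc
        · simp only [f, if_neg hx, if_neg hy]
          intro hc
          exact c.valid ⟨hne, Or.inl ⟨hx, hy, hxy⟩⟩ (Fin.castSucc_injective _ hc)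
    have := this.chromaticNumber_le
    rw [← hn] at this ⊢
    exact this
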